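/- If a function f : ℂ → ℂ is continuous on an open set U ⊆ ℂ and complex differentiable at every point of U \ X, where X ⊆ U is a compact countable set all of whose accumulation points lie in X and whose set of accumulation points is finite (i.e., X is a Polish space with characteristic system (i, n) for some i ∈ {0, 1} and n ∈ ℕ), then for every triangle △(z₁, z₂, z₃) contained in U, the integral of f along the closed polygonal path [z₁, z₂, z₃, z₁] equals 0. -/

import Mathlib

open Set

/-- The complex line integral of `f` along the segment from `a` to `b`:
`∫_{t ∈ [0,1]} f((1-t)·a + t·b) · (b - a) dt`. -/
noncomputable def segmentIntegral (f : ℂ → ℂ) (a b : ℂ) : ℂ :=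
  ∫ t in (0:ℝ)..1, f ((1 - t) • a + t • b) * (b - a)

/-- The integral of `f` along the closed polygonal path `[z₁, z₂, z₃, z₁]`. -/
noncomputable def triangleIntegral (f : ℂ → ℂ) (z₁ z₂ z₃ : ℂ) : ℂ :=
  segmentIntegral f z₁ z₂ + segmentIntegral f z₂ z₃ + segmentIntegral f z₃ z₁

/-- `w` is an accumulation point of `X`: every neighborhood of `w` contains a
point of `X` other than `w`. -/
def IsAccumulationPoint (w : ℂ) (X : Set ℂ) : Prop :=
  ∀ V ∈ nhds w, ∃ x, x ∈ V ∩ X ∧ x ≠ w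

private lemma combo_eq (t : ℝ) (a b : ℂ) : a + (t : ℂ) * (b - a) = (1 - t) • a + t • b := by
  rw [Complex.real_smul, Complex.real_smul]
  push_cast
  ring

/-- On a convex open set where `f` is differentiable, the radial integral from `c`
is a primitive of `f`. -/
private lemma hasDerivAt_primitive {f : ℂ → ℂ} {V : Set ℂ} (hV : IsOpen V)
    (hconv : Convex ℝ V) (hdV : ∀ z ∈ V, DifferentiableAt ℂ f z)
    {c : ℂ} (hc : c ∈ V) {w₀ : ℂ} (hw₀ : w₀ ∈ V) :
    HasDerivAt (fun w => ∫ t in (0:ℝ)..1, f (c + (t : ℂ) * (w - c)) * (w - c)) (f w₀) w₀ := by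
  have hfc : ContinuousOn f V := fun z hz => (hdV z hz).continuousAt.continuousWithinAt
  have hdf : ContinuousOn (deriv f) V := by
    have h1 : DifferentiableOn ℂ f V := fun z hz => (hdV z hz).differentiableWithinAt
    exact ((h1.analyticOnNhd hV).deriv_of_isOpen hV).continuousOn
  -- choose a closed ball around w₀ inside V
  obtain ⟨r, hr0, hball⟩ := Metric.nhds_basis_closedBall.mem_iff.1 (hV.mem_nhds hw₀)
  -- a compact set containing all relevant points
  set K : Set ℂ := (fun p : ℝ × ℂ => c + (p.1 : ℂ) * (p.2 - c)) ''
      (Set.Icc (0:ℝ) 1 ×ˢ Metric.closedBall w₀ r) with hK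
  have hKV : K ⊆ V := by
    rintro _ ⟨⟨t, x⟩, ⟨ht, hx⟩, rfl⟩
    simp only
    rw [combo_eq]
    exact hconv hc (hball hx) (by linarith [ht.2]) ht.1 (by ring)
  have hKcomp : IsCompact K := by
    apply (isCompact_Icc.prod (isCompact_closedBall _ _)).image
    exact continuous_const.add ((Complex.continuous_ofReal.comp continuous_fst).mul
      (continuous_snd.sub continuous_const))
  have hcK : c ∈ K := ⟨(0, w₀), ⟨by norm_num, Metric.mem_closedBall_self hr0.le⟩, by simp⟩
  have hγK : ∀ t ∈ Set.Icc (0:ℝ) 1, ∀ x ∈ Metric.ball w₀ r, c + (t : ℂ) * (x - c) ∈ K := by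
    intro t ht x hx
    exact ⟨(t, x), ⟨ht, Metric.ball_subset_closedBall hx⟩, rfl⟩
  obtain ⟨C₁, hC₁⟩ := hKcomp.exists_bound_of_continuousOn (hfc.mono hKV)
  obtain ⟨C₂, hC₂⟩ := hKcomp.exists_bound_of_continuousOn (hdf.mono hKV)
  have hC₁0 : 0 ≤ C₁ := le_trans (norm_nonneg _) (hC₁ c hcK)
  have hC₂0 : 0 ≤ C₂ := le_trans (norm_nonneg _) (hC₂ c hcK)
  set F' : ℂ → ℝ → ℂ := fun x t => deriv f (c + (t : ℂ) * (x - c)) * (t : ℂ) * (x - c)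
      + f (c + (t : ℂ) * (x - c)) with hF'
  have key := intervalIntegral.hasDerivAt_integral_of_dominated_loc_of_deriv_le
    (𝕜 := ℂ) (μ := MeasureTheory.volume) (a := (0:ℝ)) (b := (1:ℝ))
    (F := fun x t => f (c + (t : ℂ) * (x - c)) * (x - c)) (F' := F') (x₀ := w₀)
    (bound := fun _ => C₂ * (‖w₀ - c‖ + r) + C₁) (Metric.ball_mem_nhds w₀ hr0)
    ?_ ?_ ?_ ?_ ?_ ?_
  · -- conclude: integral of F' w₀ equals f w₀
    have h2 : (∫ t in (0:ℝ)..1, F' w₀ t) = f w₀ := by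
      have hG : ∀ t ∈ Set.uIcc (0:ℝ) 1,
          HasDerivAt (fun s : ℝ => (s : ℂ) * f (c + (s : ℂ) * (w₀ - c))) (F' w₀ t) t := by
        intro t ht
        rw [Set.uIcc_of_le (by norm_num : (0:ℝ) ≤ 1)] at ht
        have hγ : c + (t : ℂ) * (w₀ - c) ∈ V :=
          hKV (hγK t ht w₀ (Metric.mem_ball_self hr0))
        have hinner : HasDerivAt (fun z : ℂ => c + z * (w₀ - c)) (w₀ - c) (t : ℂ) := by
          simpa using ((hasDerivAt_id ((t : ℂ))).mul_const (w₀ - c)).const_add c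
        have hcomp : HasDerivAt (f ∘ fun z : ℂ => c + z * (w₀ - c))
            (deriv f (c + (t : ℂ) * (w₀ - c)) * (w₀ - c)) (t : ℂ) := by
          refine HasDerivAt.comp _ ?_ hinner
          exact (hdV _ hγ).hasDerivAt
        rw [Function.comp_def] at hcomp
        have hmul : HasDerivAt (fun z : ℂ => z * f (c + z * (w₀ - c)))
            (1 * f (c + (t : ℂ) * (w₀ - c)) +
              (t : ℂ) * (deriv f (c + (t : ℂ) * (w₀ - c)) * (w₀ - c))) (t : ℂ) :=
          (hasDerivAt_id _).mul hcomp
        have := hmul.comp_ofReal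
        convert this using 1
        rw [hF']; ring
      have hint : IntervalIntegrable (F' w₀) MeasureTheory.volume 0 1 := key.1
      have := intervalIntegral.integral_eq_sub_of_hasDerivAt hG hint
      rw [this]
      norm_num
    rw [h2] at key
    exact key.2
  · -- measurability of F x near w₀
    filter_upwards [hV.mem_nhds hw₀, Metric.ball_mem_nhds w₀ hr0] with x hxV hxb
    have hcont : ContinuousOn (fun t : ℝ => f (c + (t : ℂ) * (x - c)) * (x - c))
        (Set.Icc 0 1) := by
      apply ContinuousOn.mul _ continuousOn_const
      apply (hfc.mono hKV).comp
      · exact (continuous_const.add ((Complex.continuous_ofReal.mul continuous_const))).continuousOn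
      · intro t ht
        exact hγK t ht x hxb
    exact (hcont.mono (Set.uIoc_of_le (by norm_num : (0:ℝ) ≤ 1) ▸
      Set.Ioc_subset_Icc_self)).aestronglyMeasurable measurableSet_uIoc
  · -- integrability of F w₀
    apply ContinuousOn.intervalIntegrable
    rw [Set.uIcc_of_le (by norm_num : (0:ℝ) ≤ 1)]
    apply ContinuousOn.mul _ continuousOn_const
    apply (hfc.mono hKV).comp
    · exact (continuous_const.add ((Complex.continuous_ofReal.mul continuous_const))).continuousOn
    · intro t ht
      exact hγK t ht w₀ (Metric.mem_ball_self hr0)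
  · -- measurability of F' w₀
    have hcont : ContinuousOn (F' w₀) (Set.Icc 0 1) := by
      have hpath : Continuous fun t : ℝ => c + (t : ℂ) * (w₀ - c) :=
        continuous_const.add (Complex.continuous_ofReal.mul continuous_const)
      have hmaps : ∀ t ∈ Set.Icc (0:ℝ) 1, c + (t : ℂ) * (w₀ - c) ∈ V := fun t ht =>
        hKV (hγK t ht w₀ (Metric.mem_ball_self hr0))
      apply ContinuousOn.add
      · exact ((hdf.comp hpath.continuousOn hmaps).mul
          Complex.continuous_ofReal.continuousOn).mul continuousOn_const
      · exact hfc.comp hpath.continuousOn hmaps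
    exact (hcont.mono (Set.uIoc_of_le (by norm_num : (0:ℝ) ≤ 1) ▸
      Set.Ioc_subset_Icc_self)).aestronglyMeasurable measurableSet_uIoc
  · -- bound
    apply MeasureTheory.ae_of_all
    intro t ht x hx
    rw [Set.uIoc_of_le (by norm_num : (0:ℝ) ≤ 1)] at ht
    have ht' : t ∈ Set.Icc (0:ℝ) 1 := ⟨le_of_lt ht.1, ht.2⟩
    have hγ : c + (t : ℂ) * (x - c) ∈ K := hγK t ht' x hx
    have hxc : ‖x - c‖ ≤ ‖w₀ - c‖ + r := by
      calc ‖x - c‖ = ‖(x - w₀) + (w₀ - c)‖ := by ring_nf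
        _ ≤ ‖x - w₀‖ + ‖w₀ - c‖ := norm_add_le _ _
        _ ≤ r + ‖w₀ - c‖ := by
            have := Metric.mem_ball.1 hx
            rw [dist_eq_norm] at this
            linarith
        _ = ‖w₀ - c‖ + r := by ring
    calc ‖F' x t‖ ≤ ‖deriv f (c + (t:ℂ)*(x-c)) * (t:ℂ) * (x - c)‖ + ‖f (c + (t:ℂ)*(x-c))‖ :=
          norm_add_le _ _
      _ = ‖deriv f (c + (t:ℂ)*(x-c))‖ * ‖(t:ℂ)‖ * ‖x - c‖ + ‖f (c + (t:ℂ)*(x-c))‖ := by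
          rw [norm_mul, norm_mul]
      _ ≤ C₂ * 1 * (‖w₀ - c‖ + r) + C₁ := by
          have h1 := hC₂ _ hγ
          have h2 := hC₁ _ hγ
          have ht1 : ‖(t:ℂ)‖ ≤ 1 := by
            rw [Complex.norm_real, Real.norm_eq_abs, abs_of_pos ht.1]
            exact ht.2
          gcongr
      _ = C₂ * (‖w₀ - c‖ + r) + C₁ := by ring
  · exact intervalIntegrable_const
  · -- differentiability in x
    apply MeasureTheory.ae_of_all
    intro t ht x hx
    rw [Set.uIoc_of_le (by norm_num : (0:ℝ) ≤ 1)] at ht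
    have ht' : t ∈ Set.Icc (0:ℝ) 1 := ⟨le_of_lt ht.1, ht.2⟩
    have hγ : c + (t : ℂ) * (x - c) ∈ V := hKV (hγK t ht' x hx)
    have hinner : HasDerivAt (fun y : ℂ => c + (t : ℂ) * (y - c)) (t : ℂ) x := by
      simpa using (((hasDerivAt_id x).sub_const c).const_mul ((t : ℂ))).const_add c
    have hcomp : HasDerivAt (f ∘ fun y : ℂ => c + (t : ℂ) * (y - c))
        (deriv f (c + (t : ℂ) * (x - c)) * (t : ℂ)) x := by
      refine HasDerivAt.comp _ ?_ hinner
      exact (hdV _ hγ).hasDerivAt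
    rw [Function.comp_def] at hcomp
    have hsub : HasDerivAt (fun y : ℂ => y - c) 1 x := (hasDerivAt_id x).sub_const c
    have := hcomp.mul hsub
    exact this.congr_deriv (by rw [hF']; ring)

private lemma segmentIntegral_eq_sub {f : ℂ → ℂ} {V : Set ℂ} (hV : IsOpen V)
    (hconv : Convex ℝ V) (hdV : ∀ z ∈ V, DifferentiableAt ℂ f z)
    {c : ℂ} (hc : c ∈ V) {a b : ℂ} (ha : a ∈ V) (hb : b ∈ V) :
    segmentIntegral f a b =
      (∫ t in (0:ℝ)..1, f (c + (t : ℂ) * (b - c)) * (b - c)) -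
      (∫ t in (0:ℝ)..1, f (c + (t : ℂ) * (a - c)) * (a - c)) := by
  set Fp : ℂ → ℂ := fun w => ∫ t in (0:ℝ)..1, f (c + (t : ℂ) * (w - c)) * (w - c) with hFp
  have hfc : ContinuousOn f V := fun z hz => (hdV z hz).continuousAt.continuousWithinAt
  have hseg : ∀ t ∈ Set.Icc (0:ℝ) 1, (1 - t) • a + t • b ∈ V := by
    intro t ht
    exact hconv ha hb (by linarith [ht.2]) ht.1 (by ring)
  have hG : ∀ t ∈ Set.uIcc (0:ℝ) 1,
      HasDerivAt (fun s : ℝ => Fp ((1 - s) • a + s • b)) (f ((1 - t) • a + t • b) * (b - a)) t := by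
    intro t ht
    rw [Set.uIcc_of_le (by norm_num : (0:ℝ) ≤ 1)] at ht
    have hγ : (1 - t) • a + t • b ∈ V := hseg t ht
    have hγ' : a + (t : ℂ) * (b - a) ∈ V := by rw [combo_eq]; exact hγ
    have hFp' : HasDerivAt Fp (f (a + (t : ℂ) * (b - a))) (a + (t : ℂ) * (b - a)) :=
      hasDerivAt_primitive hV hconv hdV hc hγ'
    have hinner : HasDerivAt (fun z : ℂ => a + z * (b - a)) (b - a) (t : ℂ) := by
      simpa using ((hasDerivAt_id ((t : ℂ))).mul_const (b - a)).const_add a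
    have hcomp : HasDerivAt (Fp ∘ fun z : ℂ => a + z * (b - a))
        (f (a + (t : ℂ) * (b - a)) * (b - a)) (t : ℂ) := by
      refine HasDerivAt.comp _ ?_ hinner
      exact hFp'
    rw [Function.comp_def] at hcomp
    have := hcomp.comp_ofReal
    have heq : (fun s : ℝ => Fp (a + (s : ℂ) * (b - a))) =
        fun s : ℝ => Fp ((1 - s) • a + s • b) := by
      funext s; rw [combo_eq]
    rw [heq] at this
    rw [combo_eq] at this
    exact this
  have hint : IntervalIntegrable (fun t : ℝ => f ((1 - t) • a + t • b) * (b - a))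
      MeasureTheory.volume 0 1 := by
    apply ContinuousOn.intervalIntegrable
    rw [Set.uIcc_of_le (by norm_num : (0:ℝ) ≤ 1)]
    apply ContinuousOn.mul _ continuousOn_const
    apply hfc.comp
    · exact ((continuous_const.sub continuous_id).smul continuous_const).add
        (continuous_id.smul continuous_const) |>.continuousOn
    · exact hseg
  have := intervalIntegral.integral_eq_sub_of_hasDerivAt hG hint
  rw [segmentIntegral, this]
  norm_num [hFp]

theorem stmt_3 (f : ℂ → ℂ) (U : Set ℂ) (hU : IsOpen U)
    (hf : ContinuousOn f U) (X : Set ℂ) (hXU : X ⊆ U)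
    (hXcomp : IsCompact X) (hXcount : X.Countable)
    (hacc : {w | IsAccumulationPoint w X} ⊆ X)
    (haccfin : {w | IsAccumulationPoint w X}.Finite)
    (hd : ∀ z ∈ U \ X, DifferentiableAt ℂ f z)
    (z₁ z₂ z₃ : ℂ) (htri : convexHull ℝ {z₁, z₂, z₃} ⊆ U) :
    triangleIntegral f z₁ z₂ z₃ = 0 := by
  -- Step 1: f is differentiable everywhere on U
  have hdU : ∀ z ∈ U, DifferentiableAt ℂ f z := by
    intro z hz
    obtain ⟨R, hR0, hsub⟩ := Metric.nhds_basis_closedBall.mem_iff.1 (hU.mem_nhds hz)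
    lift R to NNReal using hR0.le
    have hR0' : 0 < R := by exact_mod_cast hR0
    have hps := Complex.hasFPowerSeriesOnBall_of_differentiable_off_countable
      (c := z) (R := R) hXcount (hf.mono hsub)
      (fun w hw => hd w ⟨hsub (Metric.ball_subset_closedBall hw.1), hw.2⟩) hR0'
    have := hps.analyticAt
    exact this.differentiableAt
  -- Step 2: convex open neighborhood of the triangle
  have hhullcomp : IsCompact (convexHull ℝ {z₁, z₂, z₃}) :=
    (((Set.finite_singleton z₃).insert z₂).insert z₁).isCompact_convexHull ℝ
  obtain ⟨ε, hε0, hεsub⟩ := hhullcomp.exists_thickening_subset_open hU htri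
  set V : Set ℂ := Metric.thickening ε (convexHull ℝ {z₁, z₂, z₃}) with hVdef
  have hVopen : IsOpen V := Metric.isOpen_thickening
  have hVconv : Convex ℝ V := (convex_convexHull ℝ _).thickening ε
  have hVU : V ⊆ U := hεsub
  have hdV : ∀ z ∈ V, DifferentiableAt ℂ f z := fun z hz => hdU z (hVU hz)
  have hsubV : convexHull ℝ {z₁, z₂, z₃} ⊆ V := Metric.self_subset_thickening hε0 _
  have h1 : z₁ ∈ V := hsubV (subset_convexHull ℝ _ (by simp))
  have h2 : z₂ ∈ V := hsubV (subset_convexHull ℝ _ (by simp))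
  have h3 : z₃ ∈ V := hsubV (subset_convexHull ℝ _ (by simp))
  -- Step 3: telescoping via primitive
  rw [triangleIntegral,
    segmentIntegral_eq_sub hVopen hVconv hdV h1 h1 h2,
    segmentIntegral_eq_sub hVopen hVconv hdV h1 h2 h3,
    segmentIntegral_eq_sub hVopen hVconv hdV h1 h3 h1]
  ring
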